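/- For every strictly positive pmf r on Z k, the ELBO of the mean-field family obtained from q by replacing its k-th factor with r is at most the ELBO of the family obtained by replacing the k-th factor with the CAVI update q*_k; that is, the mean-field factor q_k(z_k) ∝ exp(E_{−k}[log p(z_k, z_{−k}, x)]) maximizes the ELBO with the other factors held fixed. -/

import Mathlib

open Finset

variable {ι : Type*} {Z : ι → Type*}

/-- The ELBO of a mean-field family `q` for joint density `p`. -/
noncomputable def meanFieldELBO [Fintype ι] [DecidableEq ι] [∀ i, Fintype (Z i)]
    (p : (∀ i, Z i) → ℝ) (q : ∀ i, Z i → ℝ) : ℝ :=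
  ∑ z : ∀ i, Z i, (∏ i, q i (z i)) * (Real.log (p z) - ∑ i, Real.log (q i (z i)))

/-- `E₋ₖ(y)`: the expectation, over the coordinates other than `k` (distributed
according to the factors `q i`, `i ≠ k`), of `log p` of the configuration equal to `y`
at coordinate `k`. -/
noncomputable def Eminus [Fintype ι] [DecidableEq ι] [∀ i, Fintype (Z i)]
    (p : (∀ i, Z i) → ℝ) (q : ∀ i, Z i → ℝ) (k : ι) (y : Z k) : ℝ :=
  ∑ w : ∀ i : {i : ι // i ≠ k}, Z i, (∏ i : {i : ι // i ≠ k}, q i (w i)) *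
    Real.log (p (fun i => if h : i = k then h.symm ▸ y else w ⟨i, h⟩))

/-- The CAVI update at coordinate `k`: the pmf proportional to `exp (E₋ₖ ·)`. -/
noncomputable def caviUpdate [Fintype ι] [DecidableEq ι] [∀ i, Fintype (Z i)]
    (p : (∀ i, Z i) → ℝ) (q : ∀ i, Z i → ℝ) (k : ι) (y : Z k) : ℝ :=
  Real.exp (Eminus p q k y) / ∑ y' : Z k, Real.exp (Eminus p q k y')

lemma sum_prod_subtype_eq_one [Fintype ι] [DecidableEq ι] [∀ i, Fintype (Z i)]
    (q : ∀ i, Z i → ℝ) (hq1 : ∀ i, ∑ y, q i y = 1) (k : ι) :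
    ∑ w : ∀ i : {i : ι // i ≠ k}, Z i, ∏ i : {i : ι // i ≠ k}, q i (w i) = 1 := by
  classical
  rw [← Fintype.piFinset_univ, ← Finset.prod_univ_sum]
  simp [hq1]

lemma glue_prod [Fintype ι] [DecidableEq ι] {M : Type*} [CommMonoid M]
    (f : ∀ i, Z i → M) (k : ι) (y : Z k) (w : ∀ i : {i : ι // i ≠ k}, Z i) :
    ∏ i, f i ((fun i => if h : i = k then h.symm ▸ y else w ⟨i, h⟩) i)
      = f k y * ∏ i : {i : ι // i ≠ k}, f i (w i) := by
  rw [Fintype.prod_eq_mul_prod_compl k]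
  congr 1
  · simp
  · rw [Finset.prod_subtype (p := fun i => i ≠ k) ({k}ᶜ : Finset ι) (fun x => by simp)
      (fun i => f i (if h : i = k then h.symm ▸ y else w ⟨i, h⟩))]
    exact Finset.prod_congr rfl fun i _ => by
      cases i with | mk i h => simp [dif_neg h]

lemma glue_sum [Fintype ι] [DecidableEq ι] {M : Type*} [AddCommMonoid M]
    (f : ∀ i, Z i → M) (k : ι) (y : Z k) (w : ∀ i : {i : ι // i ≠ k}, Z i) :
    ∑ i, f i ((fun i => if h : i = k then h.symm ▸ y else w ⟨i, h⟩) i)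
      = f k y + ∑ i : {i : ι // i ≠ k}, f i (w i) := by
  rw [Fintype.sum_eq_add_sum_compl k]
  congr 1
  · simp
  · rw [Finset.sum_subtype (p := fun i => i ≠ k) ({k}ᶜ : Finset ι) (fun x => by simp)
      (fun i => f i (if h : i = k then h.symm ▸ y else w ⟨i, h⟩))]
    exact Finset.sum_congr rfl fun i _ => by
      cases i with | mk i h => simp [dif_neg h]

lemma elbo_update [Fintype ι] [DecidableEq ι] [∀ i, Fintype (Z i)]
    (p : (∀ i, Z i) → ℝ) (q : ∀ i, Z i → ℝ) (hq1 : ∀ i, ∑ y, q i y = 1)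
    (k : ι) (s : Z k → ℝ) (hs1 : ∑ y, s y = 1) :
    meanFieldELBO p (Function.update q k s) =
      (∑ y, s y * (Eminus p q k y - Real.log (s y))) -
      ∑ w : ∀ i : {i : ι // i ≠ k}, Z i, (∏ i : {i : ι // i ≠ k}, q i (w i)) *
        ∑ i : {i : ι // i ≠ k}, Real.log (q i (w i)) := by
  classical
  set glue : (y : Z k) → (∀ i : {i : ι // i ≠ k}, Z i) → ∀ i, Z i :=
    fun y w i => if h : i = k then h.symm ▸ y else w ⟨i, h⟩ with hglue
  have hz : ∀ (y : Z k) (w : ∀ i : {i : ι // i ≠ k}, Z i),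
      (Equiv.piSplitAt k Z).symm (y, w) = glue y w := by
    intro y w
    funext i
    by_cases h : i = k
    · subst h; simp [hglue]
    · simp [hglue, h]
  have key : meanFieldELBO p (Function.update q k s) =
      ∑ y, ∑ w : ∀ i : {i : ι // i ≠ k}, Z i,
        (s y * ∏ i : {i : ι // i ≠ k}, q i (w i)) *
        (Real.log (p (glue y w)) -
          (Real.log (s y) + ∑ i : {i : ι // i ≠ k}, Real.log (q i (w i)))) := by
    rw [meanFieldELBO, ← (Equiv.piSplitAt k Z).symm.sum_comp, Fintype.sum_prod_type]
    refine Finset.sum_congr rfl fun y _ => Finset.sum_congr rfl fun w _ => ?_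
    rw [hz]
    congr 1
    · have := glue_prod (fun i v => Function.update q k s i v) k y w
      simpa [Function.update_of_ne, fun i : {i : ι // i ≠ k} => i.2] using this
    · congr 1
      have := glue_sum (fun i v => Real.log (Function.update q k s i v)) k y w
      simpa [Function.update_of_ne, fun i : {i : ι // i ≠ k} => i.2] using this
  rw [key]
  have inner : ∀ y, ∑ w : ∀ i : {i : ι // i ≠ k}, Z i,
      (s y * ∏ i : {i : ι // i ≠ k}, q i (w i)) *
        (Real.log (p (glue y w)) -
          (Real.log (s y) + ∑ i : {i : ι // i ≠ k}, Real.log (q i (w i)))) =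
      s y * Eminus p q k y - s y * Real.log (s y) -
        s y * ∑ w : ∀ i : {i : ι // i ≠ k}, Z i, (∏ i : {i : ι // i ≠ k}, q i (w i)) *
          ∑ i : {i : ι // i ≠ k}, Real.log (q i (w i)) := by
    intro y
    have expand : ∀ w : ∀ i : {i : ι // i ≠ k}, Z i,
        (s y * ∏ i : {i : ι // i ≠ k}, q i (w i)) *
          (Real.log (p (glue y w)) -
            (Real.log (s y) + ∑ i : {i : ι // i ≠ k}, Real.log (q i (w i)))) =
        s y * ((∏ i : {i : ι // i ≠ k}, q i (w i)) * Real.log (p (glue y w)))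
          - (s y * Real.log (s y)) * (∏ i : {i : ι // i ≠ k}, q i (w i))
          - s y * ((∏ i : {i : ι // i ≠ k}, q i (w i)) *
              ∑ i : {i : ι // i ≠ k}, Real.log (q i (w i))) := fun w => by ring
    simp_rw [expand, Finset.sum_sub_distrib, ← Finset.mul_sum,
      sum_prod_subtype_eq_one q hq1 k, mul_one]
    rfl
  simp_rw [inner, Finset.sum_sub_distrib, ← Finset.sum_mul, hs1, one_mul, mul_sub,
    Finset.sum_sub_distrib]

/-- With the other factors held fixed, the CAVI update maximizes the ELBO over all
strictly positive pmf's at coordinate `k`. -/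
theorem caviUpdate_maximizes_elbo [Fintype ι] [DecidableEq ι] [Nonempty ι]
    [∀ i, Fintype (Z i)] [∀ i, Nonempty (Z i)]
    (p : (∀ i, Z i) → ℝ) (hp : ∀ z, 0 < p z)
    (q : ∀ i, Z i → ℝ) (hq : ∀ i y, 0 < q i y) (hq1 : ∀ i, ∑ y, q i y = 1)
    (k : ι) (r : Z k → ℝ) (hr : ∀ y, 0 < r y) (hr1 : ∑ y, r y = 1) :
    meanFieldELBO p (Function.update q k r) ≤
      meanFieldELBO p (Function.update q k (caviUpdate p q k)) := by
  classical
  set S : ℝ := ∑ y' : Z k, Real.exp (Eminus p q k y') with hSdef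
  have hS : 0 < S := Finset.sum_pos (fun y _ => Real.exp_pos _) Finset.univ_nonempty
  have hcavi1 : ∑ y, caviUpdate p q k y = 1 := by
    simp only [caviUpdate, ← Finset.sum_div, ← hSdef]
    exact div_self hS.ne'
  rw [elbo_update p q hq1 k r hr1, elbo_update p q hq1 k _ hcavi1]
  refine sub_le_sub_right ?_ _
  have hRHS : ∑ y, caviUpdate p q k y * (Eminus p q k y - Real.log (caviUpdate p q k y)) =
      Real.log S := by
    have : ∀ y : Z k, caviUpdate p q k y * (Eminus p q k y - Real.log (caviUpdate p q k y)) =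
        caviUpdate p q k y * Real.log S := by
      intro y
      rw [caviUpdate, Real.log_div (Real.exp_ne_zero _) hS.ne', Real.log_exp, ← hSdef]
      ring
    rw [Finset.sum_congr rfl (fun y _ => this y), ← Finset.sum_mul, hcavi1, one_mul]
  rw [hRHS]
  have hgm := Real.geom_mean_le_arith_mean_weighted Finset.univ r
    (fun y => Real.exp (Eminus p q k y) / r y) (fun y _ => (hr y).le) hr1
    (fun y _ => (div_pos (Real.exp_pos _) (hr y)).le)
  have hsum : ∑ y, r y * (Real.exp (Eminus p q k y) / r y) = S := by
    refine Finset.sum_congr rfl fun y _ => ?_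
    rw [mul_div_cancel₀ _ (hr y).ne']
  have hprodpos : 0 < ∏ y, (Real.exp (Eminus p q k y) / r y) ^ (r y) :=
    Finset.prod_pos fun y _ => Real.rpow_pos_of_pos (div_pos (Real.exp_pos _) (hr y)) _
  have hlog := Real.log_le_log hprodpos (hsum ▸ hgm)
  rw [Real.log_prod (fun y _ => (Real.rpow_pos_of_pos (div_pos (Real.exp_pos _) (hr y)) _).ne')] at hlog
  refine le_trans (le_of_eq ?_) hlog
  refine Finset.sum_congr rfl fun y _ => ?_
  rw [Real.log_rpow (div_pos (Real.exp_pos _) (hr y)),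
    Real.log_div (Real.exp_ne_zero _) (hr y).ne', Real.log_exp]
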